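/- Let C ⊆ F_q^n be a linear code, T ⊆ {1,…,n}, and χ a nontrivial additive character of F_q. Then the Jacobi polynomial of the dual code satisfies J_{C⊥,T}(w,z,x,y) = (1/|C|) · J_{C,T}(w + (q−1)z, w − z, x + (q−1)y, x − y). -/

import Mathlib

open scoped Classical
set_option maxHeartbeats 1000000
lemma weight_prod {F : Type*} [Field F] {n : ℕ} (T : Finset (Fin n)) (w z x y : ℂ) (v : Fin n → F) :
    w ^ (T.filter fun i => v i = 0).card * z ^ (T.filter fun i => v i ≠ 0).card *
      x ^ (Tᶜ.filter fun i => v i = 0).card * y ^ (Tᶜ.filter fun i => v i ≠ 0).card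
    = ∏ i, (if i ∈ T then (if v i = 0 then w else z) else (if v i = 0 then x else y)) := by
  have h1 : Finset.univ.filter (fun i => i ∈ T) = T := by ext i; simp
  have h2 : Finset.univ.filter (fun i => ¬ i ∈ T) = Tᶜ := by ext i; simp
  rw [Finset.prod_ite, h1, h2, Finset.prod_ite, Finset.prod_ite,
    Finset.prod_const, Finset.prod_const, Finset.prod_const, Finset.prod_const]
  simp only [Ne]
  ring

lemma local_sum {F : Type*} [Field F] [Fintype F] (χ : AddChar F ℂ) (hχ : χ.IsPrimitive) (b : F) (A B : ℂ) :
    ∑ a : F, χ (b * a) * (if a = 0 then A else B)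
      = if b = 0 then A + ((Fintype.card F : ℂ) - 1) * B else A - B := by
  have key : ∀ a : F, χ (b * a) * (if a = 0 then A else B)
      = χ (b * a) * B + (if a = 0 then A - B else 0) := by
    intro a
    split_ifs with h
    · rw [h, mul_zero, AddChar.map_zero_eq_one]; ring
    · ring
  rw [Finset.sum_congr rfl fun a _ => key a, Finset.sum_add_distrib]
  have hs : ∑ a : F, χ (b * a) * B = (if b = 0 then (Fintype.card F : ℂ) else 0) * B := by
    rw [← Finset.sum_mul]
    congr 1
    simp_rw [mul_comm b]
    exact_mod_cast AddChar.sum_mulShift b hχ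
  have ht : (∑ a : F, if a = 0 then A - B else 0) = A - B := by
    rw [Finset.sum_ite_eq' Finset.univ (0 : F) (fun _ => A - B)]
    simp
  rw [hs, ht]
  split_ifs with h <;> ring

def dotHom {F : Type*} [Field F] {n : ℕ} (v : Fin n → F) : (Fin n → F) →+ F where
  toFun u := ∑ i, u i * v i
  map_zero' := by simp
  map_add' a b := by
    simp only [Pi.add_apply, add_mul]
    rw [Finset.sum_add_distrib]

lemma code_char_sum {F : Type*} [Field F] [Fintype F] {n : ℕ} (χ : AddChar F ℂ) (hχ : χ.IsPrimitive)
    (C Cperp : Submodule F (Fin n → F))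
    (hperp : ∀ v, v ∈ Cperp ↔ ∀ u ∈ C, ∑ i, u i * v i = 0) (v : Fin n → F) :
    ∑ u : C, χ (∑ i, (u : Fin n → F) i * v i)
      = if v ∈ Cperp then (Fintype.card C : ℂ) else 0 := by
  set ψ : AddChar C ℂ :=
    χ.compAddMonoidHom ((dotHom v).comp C.subtype.toAddMonoidHom) with hψ
  have hψapp : ∀ u : C, ψ u = χ (∑ i, (u : Fin n → F) i * v i) := fun u => rfl
  split_ifs with hv
  · have h1 : ∀ u : C, χ (∑ i, (u : Fin n → F) i * v i) = 1 := by
      intro u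
      rw [(hperp v).1 hv _ u.2, AddChar.map_zero_eq_one]
    simp [h1]
  · have hne : ψ ≠ 1 := by
      intro h1
      obtain ⟨u₀, hu₀C, hc⟩ : ∃ u₀, u₀ ∈ C ∧ ∑ i, u₀ i * v i ≠ 0 := by
        by_contra hcon
        push_neg at hcon
        exact hv ((hperp v).2 hcon)
      set c := ∑ i, u₀ i * v i with hcdef
      apply hχ hc
      ext a
      have huC : a • u₀ ∈ C := C.smul_mem a hu₀C
      have hval : (∑ i, (a • u₀) i * v i) = a * c := by
        simp [hcdef, Finset.mul_sum, mul_assoc]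
      have h2 := congrArg (fun f : AddChar C ℂ => f ⟨a • u₀, huC⟩) h1
      simp only [AddChar.one_apply] at h2
      rw [hψapp ⟨a • u₀, huC⟩, hval] at h2
      simpa [AddChar.mulShift_apply, mul_comm] using h2
    calc ∑ u : C, χ (∑ i, (u : Fin n → F) i * v i) = ∑ u : C, ψ u := by
          simp_rw [hψapp]
      _ = 0 := AddChar.sum_eq_zero_of_ne_one hne

lemma addChar_map_sum {F : Type*} [Field F] {ι : Type*} (χ : AddChar F ℂ) (s : Finset ι) (f : ι → F) :
    χ (∑ i ∈ s, f i) = ∏ i ∈ s, χ (f i) := by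
  induction s using Finset.cons_induction with
  | empty => simp
  | cons a s ha ih => rw [Finset.sum_cons, Finset.prod_cons, AddChar.map_add_eq_mul, ih]

noncomputable def jacEval {F : Type*} [Field F] [Fintype F] {n : ℕ}
    (C : Submodule F (Fin n → F)) (T : Finset (Fin n)) (w z x y : ℂ) : ℂ :=
  ∑ u : C, w ^ (T.filter fun i => (u : Fin n → F) i = 0).card *
    z ^ (T.filter fun i => (u : Fin n → F) i ≠ 0).card *
    x ^ (Tᶜ.filter fun i => (u : Fin n → F) i = 0).card *
    y ^ (Tᶜ.filter fun i => (u : Fin n → F) i ≠ 0).card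

noncomputable def jacG {F : Type*} [Field F] {n : ℕ} (T : Finset (Fin n))
    (w z x y : ℂ) (i : Fin n) (a : F) : ℂ :=
  if i ∈ T then (if a = 0 then w else z) else (if a = 0 then x else y)

lemma jacEval_eq_filter {F : Type*} [Field F] [Fintype F] {n : ℕ}
    (C : Submodule F (Fin n → F)) (T : Finset (Fin n)) (w z x y : ℂ) :
    jacEval C T w z x y = ∑ v ∈ Finset.univ.filter (fun v => v ∈ C),
      w ^ (T.filter fun i => v i = 0).card * z ^ (T.filter fun i => v i ≠ 0).card *
      x ^ (Tᶜ.filter fun i => v i = 0).card * y ^ (Tᶜ.filter fun i => v i ≠ 0).card := by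
  unfold jacEval
  refine (Finset.sum_subtype (p := fun v => v ∈ C) (M := ℂ)
    (Finset.univ.filter (fun v => v ∈ C)) (fun v => by simp)
    (fun v => w ^ (T.filter fun i => v i = 0).card * z ^ (T.filter fun i => v i ≠ 0).card *
      x ^ (Tᶜ.filter fun i => v i = 0).card * y ^ (Tᶜ.filter fun i => v i ≠ 0).card)).symm

/-- The MacWilliams identity for Jacobi polynomials:
`J_{C⊥,T}(w,z,x,y) = (1/|C|) · J_{C,T}(w + (q−1)z, w − z, x + (q−1)y, x − y)`. -/
theorem jacEval_dual_macwilliams {F : Type*} [Field F] [Fintype F] {n : ℕ}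
    (C Cperp : Submodule F (Fin n → F))
    (hperp : ∀ v, v ∈ Cperp ↔ ∀ u ∈ C, ∑ i, u i * v i = 0)
    (T : Finset (Fin n)) (w z x y : ℂ) :
    jacEval Cperp T w z x y
      = (Fintype.card C : ℂ)⁻¹ *
          jacEval C T (w + ((Fintype.card F : ℂ) - 1) * z) (w - z)
            (x + ((Fintype.card F : ℂ) - 1) * y) (x - y) := by
  obtain ⟨χ, hχ⟩ : ∃ χ : AddChar F ℂ, χ.IsPrimitive :=
    ⟨AddChar.FiniteField.primitiveChar_to_Complex F,
      AddChar.FiniteField.primitiveChar_to_Complex_isPrimitive F⟩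
  let g : Fin n → F → ℂ := jacG T w z x y
  have hg : ∀ i a, g i a =
      if i ∈ T then (if a = 0 then w else z) else (if a = 0 then x else y) :=
    fun i a => rfl
  have key : jacEval C T (w + ((Fintype.card F : ℂ) - 1) * z) (w - z)
      (x + ((Fintype.card F : ℂ) - 1) * y) (x - y)
      = (Fintype.card C : ℂ) * jacEval Cperp T w z x y := by
    have step1 : ∀ u : Fin n → F,
        (w + ((Fintype.card F : ℂ) - 1) * z) ^ (T.filter fun i => u i = 0).card *
          (w - z) ^ (T.filter fun i => u i ≠ 0).card *
          (x + ((Fintype.card F : ℂ) - 1) * y) ^ (Tᶜ.filter fun i => u i = 0).card *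
          (x - y) ^ (Tᶜ.filter fun i => u i ≠ 0).card
        = ∏ i, ∑ a : F, χ (u i * a) * g i a := by
      intro u
      rw [weight_prod]
      refine Finset.prod_congr rfl fun i _ => ?_
      by_cases hi : i ∈ T
      · rw [show (∑ a : F, χ (u i * a) * g i a) = ∑ a : F, χ (u i * a) *
            (if a = 0 then w else z) by simp only [hg, if_pos hi]]
        rw [local_sum χ hχ]
        simp [hi]
      · rw [show (∑ a : F, χ (u i * a) * g i a) = ∑ a : F, χ (u i * a) *
            (if a = 0 then x else y) by simp only [hg, if_neg hi]]
        rw [local_sum χ hχ]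
        simp [hi]
    have step2 : ∀ u : Fin n → F,
        (∏ i, ∑ a : F, χ (u i * a) * g i a)
        = ∑ v : Fin n → F, χ (∑ i, u i * v i) * ∏ i, g i (v i) := by
      intro u
      rw [Fintype.prod_sum (f := fun i a => χ (u i * a) * g i a)]
      refine Finset.sum_congr rfl fun v _ => ?_
      rw [addChar_map_sum, Finset.prod_mul_distrib]
    calc jacEval C T (w + ((Fintype.card F : ℂ) - 1) * z) (w - z)
          (x + ((Fintype.card F : ℂ) - 1) * y) (x - y)
        = ∑ u : C, ∑ v : Fin n → F,
            χ (∑ i, (u : Fin n → F) i * v i) * ∏ i, g i (v i) := by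
          unfold jacEval
          refine Finset.sum_congr rfl fun u _ => ?_
          rw [step1, step2]
      _ = ∑ v : Fin n → F,
            (∑ u : C, χ (∑ i, (u : Fin n → F) i * v i)) * ∏ i, g i (v i) := by
          rw [Finset.sum_comm]
          simp_rw [Finset.sum_mul]
      _ = ∑ v : Fin n → F,
            (if v ∈ Cperp then (Fintype.card C : ℂ) else 0) * ∏ i, g i (v i) := by
          refine Finset.sum_congr rfl fun v _ => ?_
          rw [code_char_sum χ hχ C Cperp hperp v]
      _ = (Fintype.card C : ℂ) *
            ∑ v ∈ Finset.univ.filter (fun v => v ∈ Cperp), ∏ i, g i (v i) := by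
          rw [Finset.mul_sum, Finset.sum_filter]
          refine Finset.sum_congr rfl fun v _ => ?_
          split_ifs <;> simp
      _ = (Fintype.card C : ℂ) * jacEval Cperp T w z x y := by
          rw [jacEval_eq_filter]
          congr 1
          exact Finset.sum_congr rfl fun v _ => (weight_prod T w z x y v).symm
  rw [key, ← mul_assoc, inv_mul_cancel₀, one_mul]
  exact_mod_cast Nat.cast_ne_zero.mpr Fintype.card_ne_zero
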